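/- Suppose f(x_c) > x_c and fᵏ(a) < x_c, fᵏ(b) < x_c for all k ≥ 1. Let y_k = max S^k be the rightmost critical point of fᵏ. Then for all k ≥ 2: y_k > y_{k-1}, fᵏ has a local maximum at y_k with (fᵏ)''(y_k) < 0, and fᵏ(y_k) = f(x_c) > x_c. -/

import Mathlib

open Set

theorem rightmost_crit_point_positive_max
    (a b x_c : ℝ) (f : ℝ → ℝ) (hab : a < b)
    (hmap : Set.MapsTo f (Set.Icc a b) (Set.Icc a b))
    (hf : ContDiff ℝ 2 f)
    (hxc : x_c ∈ Set.Ioo a b)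
    (h2 : deriv (deriv f) x_c < 0)
    (hup : ∀ x ∈ Set.Ico a x_c, 0 < deriv f x)
    (hdn : ∀ x ∈ Set.Ioc x_c b, deriv f x < 0)
    (hc : f x_c > x_c)
    (hbd : ∀ k : ℕ, 1 ≤ k → f^[k] a < x_c ∧ f^[k] b < x_c)
    (ys : ℕ → ℝ)
    (hys : ∀ k : ℕ, 1 ≤ k →
      IsGreatest {x ∈ Icc a b | deriv (f^[k]) x = 0} (ys k)) :
    ∀ k : ℕ, 2 ≤ k →
      ys (k - 1) < ys k ∧ deriv (deriv (f^[k])) (ys k) < 0 ∧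
      f^[k] (ys k) = f x_c ∧ f x_c > x_c := by
  have hfd : Differentiable ℝ f := hf.differentiable (by norm_num)
  have hcont : Continuous f := hfd.continuous
  have hf2 : ContDiff ℝ ((1:ℕ)+1) f := by exact_mod_cast hf
  have hfd1 : ContDiff ℝ 1 (deriv f) := (contDiff_succ_iff_deriv.mp hf2).2.2
  have hdfd : Differentiable ℝ (deriv f) := hfd1.differentiable (by norm_num)
  have hCk : ∀ k : ℕ, ContDiff ℝ 2 (f^[k]) := by
    intro k
    induction k with
    | zero => simpa using contDiff_id
    | succ n ih => rw [Function.iterate_succ']; exact hf.comp ih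
  have hDk : ∀ k : ℕ, Differentiable ℝ (f^[k]) := fun k => (hCk k).differentiable (by norm_num)
  have hDdk : ∀ k : ℕ, Differentiable ℝ (deriv (f^[k])) := by
    intro k
    have h2k : ContDiff ℝ ((1:ℕ)+1) (f^[k]) := by exact_mod_cast hCk k
    exact ((contDiff_succ_iff_deriv.mp h2k).2.2).differentiable (by norm_num)
  have hder : ∀ (k : ℕ) (x : ℝ), deriv (f^[k+1]) x = deriv f (f^[k] x) * deriv (f^[k]) x := by
    intro k x
    rw [Function.iterate_succ']
    exact deriv_comp x (hfd _) (hDk k x)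
  have hmono : StrictMonoOn f (Icc a x_c) :=
    strictMonoOn_of_deriv_pos (convex_Icc _ _) hcont.continuousOn
      (by intro x hx; rw [interior_Icc] at hx; exact hup x ⟨hx.1.le, hx.2⟩)
  have hanti : StrictAntiOn f (Icc x_c b) :=
    strictAntiOn_of_deriv_neg (convex_Icc _ _) hcont.continuousOn
      (by intro x hx; rw [interior_Icc] at hx; exact hdn x ⟨hx.1, hx.2.le⟩)
  have hfc0 : deriv f x_c = 0 := by
    have hlm : IsLocalMax f x_c := by
      filter_upwards [isOpen_Ioo.mem_nhds hxc] with x hx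
      rcases lt_trichotomy x x_c with h | h | h
      · exact (hmono ⟨hx.1.le, h.le⟩ ⟨hxc.1.le, le_rfl⟩ h).le
      · exact h ▸ le_rfl
      · exact (hanti ⟨le_rfl, hxc.2.le⟩ ⟨h.le, hx.2.le⟩ h).le
    exact hlm.deriv_eq_zero
  set Q : ℕ → Prop := fun k => ys k ∈ Icc a b ∧ f^[k] (ys k) = f x_c ∧
    ∀ x ∈ Ioc (ys k) b, deriv (f^[k]) x < 0 with hQdef
  have base : Q 1 := by
    have hm := (hys 1 le_rfl).1
    have hmem : ys 1 ∈ Icc a b := hm.1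
    have hd0 : deriv (f^[1]) (ys 1) = 0 := hm.2
    rw [Function.iterate_one] at hd0
    have hy1 : ys 1 = x_c := by
      rcases lt_trichotomy (ys 1) x_c with h | h | h
      · exact absurd hd0 (ne_of_gt (hup _ ⟨hmem.1, h⟩))
      · exact h
      · exact absurd hd0 (ne_of_lt (hdn _ ⟨h, hmem.2⟩))
    refine ⟨hmem, ?_, ?_⟩
    · rw [Function.iterate_one, hy1]
    · intro x hx
      rw [Function.iterate_one]
      exact hdn x (by rw [hy1] at hx; exact hx)
  have step : ∀ k : ℕ, 1 ≤ k → Q k →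
      Q (k+1) ∧ ys k < ys (k+1) ∧ deriv (deriv (f^[k+1])) (ys (k+1)) < 0 := by
    intro k hk hQ
    obtain ⟨hmem, hval, hneg⟩ := hQ
    have hIVT : x_c ∈ f^[k] '' Ioo (ys k) b := by
      apply intermediate_value_Ioo' hmem.2 (hDk k).continuous.continuousOn
      exact ⟨(hbd k hk).2, by rw [hval]; exact hc⟩
    obtain ⟨y, hy, hyval⟩ := hIVT
    have hymem : y ∈ Icc a b := ⟨hmem.1.trans hy.1.le, hy.2.le⟩
    have hdky : deriv (f^[k]) y < 0 := hneg y ⟨hy.1, hy.2.le⟩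
    have hcrit : deriv (f^[k+1]) y = 0 := by
      rw [hder k y, hyval, hfc0, zero_mul]
    have hyle : y ≤ ys (k+1) := (hys (k+1) (by omega)).2 ⟨hymem, hcrit⟩
    have hstrict : StrictAntiOn (f^[k]) (Icc (ys k) b) :=
      strictAntiOn_of_deriv_neg (convex_Icc _ _) (hDk k).continuous.continuousOn
        (by intro x hx; rw [interior_Icc] at hx; exact hneg x ⟨hx.1, hx.2.le⟩)
    have hneg' : ∀ x ∈ Ioc y b, deriv (f^[k+1]) x < 0 := by
      intro x hx
      have hxmem : x ∈ Icc a b := ⟨hymem.1.trans hx.1.le, hx.2⟩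
      have hlt : f^[k] x < x_c := by
        rw [← hyval]
        exact hstrict ⟨hy.1.le, hy.2.le⟩ ⟨(hy.1.trans hx.1).le, hx.2⟩ hx.1
      have hge : a ≤ f^[k] x := (hmap.iterate k hxmem).1
      have hpos : 0 < deriv f (f^[k] x) := hup _ ⟨hge, hlt⟩
      have hneg2 : deriv (f^[k]) x < 0 := hneg x ⟨hy.1.trans hx.1, hx.2⟩
      rw [hder k x]
      exact mul_neg_of_pos_of_neg hpos hneg2
    have hyeq : ys (k+1) = y := by
      rcases eq_or_lt_of_le hyle with h | h
      · exact h.symm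
      · have hm := (hys (k+1) (by omega)).1
        exact absurd hm.2 (ne_of_lt (hneg' _ ⟨h, hm.1.2⟩))
    have hQ1 : Q (k+1) := by
      refine ⟨by rw [hyeq]; exact hymem, ?_, ?_⟩
      · rw [hyeq, Function.iterate_succ_apply', hyval]
      · rw [hyeq]; exact hneg'
    refine ⟨hQ1, by rw [hyeq]; exact hy.1, ?_⟩
    have hfun : deriv (f^[k+1]) = fun x => deriv f (f^[k] x) * deriv (f^[k]) x :=
      funext (hder k)
    have hd1 : DifferentiableAt ℝ (fun x => deriv f (f^[k] x)) y :=
      (hdfd (f^[k] y)).comp y (hDk k y)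
    have hd2 : DifferentiableAt ℝ (deriv (f^[k])) y := hDdk k y
    have hcomp : deriv (fun x => deriv f (f^[k] x)) y
        = deriv (deriv f) (f^[k] y) * deriv (f^[k]) y :=
      deriv_comp y (hdfd _) (hDk k y)
    rw [hyeq, hfun, deriv_fun_mul hd1 hd2, hcomp, hyval, hfc0, zero_mul, add_zero]
    nlinarith [mul_pos_of_neg_of_neg hdky hdky, h2, hdky]
  have all : ∀ n : ℕ, Q (n+1) := by
    intro n
    induction n with
    | zero => exact base
    | succ m ih => exact (step (m+1) (by omega) ih).1
  intro k hk
  obtain ⟨m, rfl⟩ : ∃ m, k = m + 2 := ⟨k - 2, by omega⟩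
  have hs := step (m+1) (by omega) (all m)
  have hm1 : m + 2 - 1 = m + 1 := by omega
  rw [hm1]
  exact ⟨hs.2.1, hs.2.2, ((hs.1).2).1, hc⟩
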